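/- Let n ≥ 1, let D : (Fin n → ℝ) → ℝ be a regular measure of deviation, and define R(Z) := E(Z) + D(Z). Then R is monotonic (R(Z) ≤ R(Z') whenever Z i ≤ Z' i for all i) if and only if D(Z) ≤ (maxᵢ Z i) − E(Z) for every Z : Fin n → ℝ. -/

import Mathlib

/-- for a regular measure of deviation `D` and `R(Z) := E(Z) + D(Z)`,
`R` is monotonic iff `D(Z) ≤ max_i Z i − E(Z)` for every `Z`. -/
theorem risk_monotone_iff_deviation_bounded (n : ℕ) (hn : 1 ≤ n)
    (D : (Fin n → ℝ) → ℝ)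
    (F1 : ∀ Z Z' : Fin n → ℝ, ∀ l : ℝ, 0 < l → l < 1 →
      D ((1 - l) • Z + l • Z') ≤ (1 - l) * D Z + l * D Z')
    (F4 : LowerSemicontinuous D)
    (F9a : ∀ Z : Fin n → ℝ, 0 ≤ D Z)
    (F9b : ∀ Z : Fin n → ℝ, D Z = 0 ↔ ∃ c : ℝ, ∀ i, Z i = c)
    (R : (Fin n → ℝ) → ℝ)
    (hR : ∀ Z : Fin n → ℝ, R Z = (∑ i, Z i) / n + D Z) :
    (∀ Z Z' : Fin n → ℝ, (∀ i, Z i ≤ Z' i) → R Z ≤ R Z') ↔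
    (∀ Z : Fin n → ℝ, D Z ≤ (⨆ i, Z i) - (∑ i, Z i) / n) := by
  have hne : Nonempty (Fin n) := ⟨⟨0, hn⟩⟩
  have hn0 : (0:ℝ) < n := by exact_mod_cast hn
  constructor
  · intro hmono Z
    set c := ⨆ i, Z i with hc
    have hle : ∀ i, Z i ≤ (fun _ : Fin n => c) i := fun i =>
      le_ciSup (Set.Finite.bddAbove (Set.finite_range Z)) i
    have h1 := hmono Z (fun _ => c) hle
    have hD0 : D (fun _ : Fin n => c) = 0 := (F9b _).mpr ⟨c, fun _ => rfl⟩
    have hsum : (∑ _i : Fin n, c) / n = c := by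
      rw [Finset.sum_const, Finset.card_fin, nsmul_eq_mul]
      field_simp
    rw [hR, hR, hD0, hsum] at h1
    linarith
  · intro hb Z Z' hZZ
    set C := (⨆ i, Z' i) - R Z' with hC
    have key : ∀ t : ℝ, t ∈ Set.Ioo (0:ℝ) 1 → R Z - R Z' ≤ t * C := by
      rintro t ⟨ht0, ht1⟩
      set l := 1 - t with hl
      have hl0 : 0 < l := by linarith
      have hl1 : l < 1 := by linarith
      clear_value l
      set W : Fin n → ℝ := fun i => (Z i - l * Z' i) / t with hW
      clear_value W
      have hcomb : (1 - l) • W + l • Z' = Z := by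
        funext i
        simp only [hW, Pi.add_apply, Pi.smul_apply, smul_eq_mul, hl]
        field_simp
        ring
      have hDW := F1 W Z' l hl0 hl1
      rw [hcomb] at hDW
      have hWle : ∀ i, W i ≤ Z' i := by
        intro i
        rw [hW, div_le_iff₀ ht0, hl]
        nlinarith [hZZ i]
      have hRW : R W ≤ ⨆ i, Z' i := by
        have h2 := hb W
        have h3 : (⨆ i, W i) ≤ ⨆ i, Z' i :=
          ciSup_le fun i => (hWle i).trans
            (le_ciSup (Set.Finite.bddAbove (Set.finite_range Z')) i)
        rw [hR]
        linarith
      have hsum : (∑ i, Z i) / (n:ℝ) =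
          (1 - l) * ((∑ i, W i)/n) + l * ((∑ i, Z' i)/n) := by
        have : ∀ i, Z i = (1 - l) * W i + l * Z' i := by
          intro i
          rw [← hcomb]
          simp
        rw [Finset.sum_congr rfl fun i _ => this i, Finset.sum_add_distrib,
          ← Finset.mul_sum, ← Finset.mul_sum]
        ring
      have hRconv : R Z ≤ (1 - l) * R W + l * R Z' := by
        rw [hR Z, hR W, hR Z', hsum]
        linarith [hDW]
      have h4 : (1 - l) * R W ≤ (1 - l) * (⨆ i, Z' i) := by
        apply mul_le_mul_of_nonneg_left hRW; linarith
      have ht : t = 1 - l := by rw [hl]; ring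
      rw [hC, ht]
      nlinarith
    have hlim : Filter.Tendsto (fun t : ℝ => t * C) (nhdsWithin 0 (Set.Ioi 0)) (nhds 0) := by
      have h : Filter.Tendsto (fun t : ℝ => t * C) (nhds 0) (nhds (0 * C)) :=
        (continuous_id.mul continuous_const).tendsto 0
      rw [zero_mul] at h
      exact h.mono_left nhdsWithin_le_nhds
    have hfin : R Z - R Z' ≤ 0 := by
      refine ge_of_tendsto hlim ?_
      filter_upwards [Ioo_mem_nhdsGT_of_mem (by norm_num : (0:ℝ) ∈ Set.Ico 0 1)] with t ht
      exact key t ht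
    linarith
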